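/- Let n ≥ 3, k ≥ 0, let R be a maximal reversible set of critical pairs of S_n^k, and let {x_1,...,x_{k+1}} be a consistent labeling of A(R) (so that α < β whenever B(x_β,R) ⊆ B(x_α,R)). Then for each i ∈ {1,...,k+1}, |B(x_i,R)| ≤ k + 2 - i. -/

import Mathlib

namespace CrownPaper

/-- Indices of the crown `S_n^k` live in `ZMod (n+k)`. The minimal element `a_i` is
incomparable to the maximal element `b_j` iff `(j - i) mod (n+k) ≤ k`. -/
def Incomp (n k : ℕ) (i j : ZMod (n + k)) : Prop := (j - i).val ≤ k

/-- `a_i < b_j` in the crown `S_n^k` iff `(j - i) mod (n+k) > k`. -/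
def CompLt (n k : ℕ) (i j : ZMod (n + k)) : Prop := k < (j - i).val

/-- A pair `(a_i, b_j)` is recorded as its pair of indices. -/
abbrev Pair (n k : ℕ) := ZMod (n + k) × ZMod (n + k)

/-- `(a_i, b_j)` is an incomparable (critical) pair. -/
def IsIncPair (n k : ℕ) (p : Pair n k) : Prop := Incomp n k p.1 p.2

/-- Adjacency in the graph `G_n^k` of critical pairs: `(a_i,b_j)` and `(a_p,b_q)` are
adjacent iff `a_i < b_q` and `a_p < b_j` in `S_n^k`. -/
def Adj (n k : ℕ) (p q : Pair n k) : Prop :=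
  CompLt n k p.1 q.2 ∧ CompLt n k q.1 p.2

/-- An independent set of critical pairs in `G_n^k`. -/
def Indep (n k : ℕ) (S : Set (Pair n k)) : Prop :=
  (∀ p ∈ S, IsIncPair n k p) ∧ ∀ p ∈ S, ∀ q ∈ S, ¬ Adj n k p q

/-- A set of pairs is reversible when some linear extension of the crown (encoded as an
injective map into `ℕ` on the disjoint union `A ⊕ B` preserving all strict comparabilities
`a_i < b_j`) puts `a` above `b` for every pair `(a,b)` of the set. -/
def Reversible (n k : ℕ) (S : Set (Pair n k)) : Prop :=
  ∃ f : (ZMod (n + k)) ⊕ (ZMod (n + k)) → ℕ,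
    Function.Injective f ∧
    (∀ i j : ZMod (n + k), CompLt n k i j → f (Sum.inl i) < f (Sum.inr j)) ∧
    ∀ p ∈ S, f (Sum.inr p.2) < f (Sum.inl p.1)

/-- for a maximal reversible set `R` with a consistent labeling
`x_1, …, x_{k+1}` of `A(R)` (so `α < β` whenever `B(x_β,R) ⊊ B(x_α,R)`), one has
`|B(x_i,R)| ≤ k + 2 - i` (here `i` is `0`-based, so the bound reads `k + 1 - i`). -/
theorem consistent_labeling_bound (n k : ℕ) (hn : 3 ≤ n) (R : Set (Pair n k))
    (hinc : ∀ p ∈ R, IsIncPair n k p) (hrev : Reversible n k R)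
    (hmax : ∀ R' : Set (Pair n k), R ⊆ R' → (∀ p ∈ R', IsIncPair n k p) →
      Reversible n k R' → R' = R)
    (x : Fin (k + 1) → ZMod (n + k)) (hxinj : Function.Injective x)
    (hrange : Set.range x = {a | ∃ b, (a, b) ∈ R})
    (hcons : ∀ α β : Fin (k + 1),
      {b | (x β, b) ∈ R} ⊂ {b | (x α, b) ∈ R} → α < β) :
    ∀ i : Fin (k + 1), {b | (x i, b) ∈ R}.ncard ≤ k + 1 - (i : ℕ) := by
  obtain ⟨f, hfinj, hfmono, hfrev⟩ := hrev
  haveI : NeZero (n + k) := ⟨by omega⟩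
  -- maximality: any critical pair reversed by `f` is already in `R`
  have hmem : ∀ a b : ZMod (n + k), Incomp n k a b →
      f (Sum.inr b) < f (Sum.inl a) → (a, b) ∈ R := by
    intro a b hic hlt
    have h' : insert (a, b) R = R := by
      refine hmax _ (Set.subset_insert _ _) ?_ ?_
      · rintro p (rfl | hp)
        · exact hic
        · exact hinc p hp
      · exact ⟨f, hfinj, hfmono, by rintro p (rfl | hp); exacts [hlt, hfrev p hp]⟩
    rw [← h']; exact Set.mem_insert _ _
  intro i
  -- every b in B(x i) lies in the critical window of x α, for all α ≤ i
  have hwin : ∀ α : Fin (k + 1), α ≤ i → ∀ b, (x i, b) ∈ R → (b - x α).val ≤ k := by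
    intro α hα b hb
    by_contra hcrit
    have hlt : CompLt n k (x α) b := Nat.lt_of_not_le hcrit
    have h1 : f (Sum.inl (x α)) < f (Sum.inr b) := hfmono _ _ hlt
    have h2 : f (Sum.inr b) < f (Sum.inl (x i)) := hfrev _ hb
    rcases eq_or_lt_of_le hα with rfl | hαi
    · exact hcrit (hinc _ hb)
    · -- B(x α) ⊊ B(x i), so hcons forces i < α, contradiction
      have hss : {b | (x α, b) ∈ R} ⊂ {b | (x i, b) ∈ R} := by
        constructor
        · intro b' hb'
          have h3 : f (Sum.inr b') < f (Sum.inl (x α)) := hfrev _ hb'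
          have hic : Incomp n k (x i) b' := by
            by_contra hic
            have := hfmono (x i) b' (Nat.lt_of_not_le hic)
            omega
          exact hmem _ _ hic (by omega)
        · intro hsub
          exact hcrit (hinc _ (hsub hb))
      exact absurd (hcons i α hss) (by omega)
  -- now count
  set S : Set (ZMod (n + k)) := {b | (x i, b) ∈ R} with hS
  rcases S.eq_empty_or_nonempty with hemp | ⟨y0, hy0⟩
  · simp [hemp]
  have hkN : k < n + k := by omega
  set d : Fin (k + 1) → ℕ := fun α => (y0 - x α).val with hd
  have hdlt : ∀ α, (↑(d α) : ZMod (n + k)) = y0 - x α := by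
    intro α; simp [hd, ZMod.natCast_val, ZMod.cast_id]
  have hdinj : Function.Injective d := by
    intro α β h
    have : y0 - x α = y0 - x β := by rw [← hdlt α, ← hdlt β, h]
    exact hxinj (sub_right_inj.mp this)
  have hdle : ∀ α : Fin (k + 1), α ≤ i → d α ≤ k := fun α hα => hwin α hα y0 hy0
  obtain ⟨m, hm_mem, hm_max⟩ :=
    Finset.exists_max_image (Finset.Iic i) d ⟨i, Finset.mem_Iic.2 le_rfl⟩
  have hmi : m ≤ i := Finset.mem_Iic.1 hm_mem
  set g : ZMod (n + k) → ℕ := fun y => (y - x m).val with hg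
  set E : Finset ℕ := ((Finset.Iic i).erase m).image (fun α => d m - d α - 1) with hE
  set T : Finset ℕ := Finset.range (k + 1) \ E with hT
  -- key: g maps S into T
  have hgT : ∀ y ∈ S, g y ∈ T := by
    intro y hy
    rw [hT, Finset.mem_sdiff]
    constructor
    · exact Finset.mem_range.2 (Nat.lt_succ_of_le (hwin m hmi y hy))
    · intro hmem'
      rw [hE] at hmem'
      obtain ⟨α, hα, hval⟩ := Finset.mem_image.1 hmem'
      have hαm : α ≠ m := (Finset.mem_erase.1 hα).1
      have hαi : α ≤ i := Finset.mem_Iic.1 (Finset.mem_erase.1 hα).2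
      have hdαm : d α < d m :=
        lt_of_le_of_ne (hm_max α (Finset.mem_erase.1 hα).2) (fun h => hαm (hdinj h))
      set δ := d m - d α with hδ
      have hδ1 : 1 ≤ δ := by omega
      have hδk : δ ≤ k := le_trans (by omega) (hdle m hmi)
      set u := (y - x α).val with hu
      have huk : u ≤ k := hwin α hαi y hy
      -- y - x m = (y - x α) + δ
      have hcalc : y - x m = (y - x α) + (δ : ZMod (n + k)) := by
        have : (δ : ZMod (n + k)) = (d m : ZMod (n + k)) - (d α : ZMod (n + k)) := by
          rw [hδ, Nat.cast_sub (le_of_lt hdαm)]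
        rw [this, hdlt, hdlt]; ring
      have hgval : g y = (u + δ) % (n + k) := by
        rw [hg]
        simp only [hcalc, ZMod.val_add, ZMod.val_cast_of_lt (lt_of_le_of_lt hδk hkN)]
        rfl
      have : (u + δ) % (n + k) = δ - 1 := by rw [← hgval, hval]
      rcases lt_or_ge (u + δ) (n + k) with hlt2 | hge2
      · rw [Nat.mod_eq_of_lt hlt2] at this; omega
      · have h2N : u + δ - (n + k) < (n + k) := by omega
        rw [Nat.mod_eq_sub_mod hge2, Nat.mod_eq_of_lt h2N] at this
        omega
  have hginj : Set.InjOn g S := by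
    intro y hy y' hy' h
    have : y - x m = y' - x m := ZMod.val_injective (n + k) h
    exact sub_left_inj.mp this
  have hcard : S.ncard ≤ T.card := by
    have := Set.ncard_le_ncard_of_injOn (t := (T : Set ℕ)) g
      (fun y hy => Finset.mem_coe.mpr (hgT y hy)) hginj T.finite_toSet
    rwa [Set.ncard_coe_finset] at this
  have hEcard : E.card = (i : ℕ) := by
    rw [hE, Finset.card_image_of_injOn, Finset.card_erase_of_mem hm_mem, Fin.card_Iic]
    · simp
    · intro α hα β hβ h
      have h' : d m - d α - 1 = d m - d β - 1 := h
      have hαm : d α < d m := lt_of_le_of_ne (hm_max α (Finset.mem_erase.1 hα).2)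
        (fun h' => (Finset.mem_erase.1 hα).1 (hdinj h'))
      have hβm : d β < d m := lt_of_le_of_ne (hm_max β (Finset.mem_erase.1 hβ).2)
        (fun h' => (Finset.mem_erase.1 hβ).1 (hdinj h'))
      exact hdinj (by omega : d α = d β)
  have hEsub : E ⊆ Finset.range (k + 1) := by
    rw [hE]
    intro v hv
    obtain ⟨α, hα, hval⟩ := Finset.mem_image.1 hv
    have := hdle m hmi
    rw [Finset.mem_range]; omega
  have hTcard : T.card = k + 1 - (i : ℕ) := by
    rw [hT, Finset.card_sdiff_of_subset hEsub, Finset.card_range, hEcard]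
  omega


end CrownPaper
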